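/- Let S ≥ 1 be a fixed integer, and let (p_n)_{n∈ℕ} be a sequence of integers with p_n ≥ 3S. For each n, let Σ_n be a positive semidefinite p_n × p_n real matrix and let T₀⁽ⁿ⁾ ⊆ {1,…,p_n} be an index set with |T₀⁽ⁿ⁾| = S. If liminf_{n→∞} (1 − δ_{2S}(Σ_n) − θ_{S,2S}(Σ_n)) > 0, then liminf_{n→∞} φ_{2S}(T₀⁽ⁿ⁾; Σ_n) > 0. -/

import Mathlib

open Matrix Finset

open Matrix Finset

noncomputable def l1 {p : ℕ} (h : Fin p → ℝ) : ℝ := ∑ j, |h j|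
noncomputable def l2 {p : ℕ} (h : Fin p → ℝ) : ℝ := Real.sqrt (∑ j, (h j) ^ 2)
noncomputable def lqNorm {p : ℕ} (q : ℝ) (h : Fin p → ℝ) : ℝ := (∑ j, |h j| ^ q) ^ (1 / q)
noncomputable def linf {p : ℕ} (h : Fin p → ℝ) : ℝ := ⨆ j, |h j|
def restr {p : ℕ} (T : Finset (Fin p)) (h : Fin p → ℝ) : Fin p → ℝ :=
  fun j => if j ∈ T then h j else 0
def coneC {p : ℕ} (T : Finset (Fin p)) (h : Fin p → ℝ) : Prop :=
  l1 (restr Tᶜ h) ≤ l1 (restr T h)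
noncomputable def quad {p : ℕ} (M : Matrix (Fin p) (Fin p) ℝ) (h : Fin p → ℝ) : ℝ :=
  h ⬝ᵥ M.mulVec h

/-- Compatibility factor `κ(T₀; M) = inf_{0 ≠ h ∈ C_{T₀}} √|T₀| (hᵀMh)^{1/2} / ‖h_{T₀}‖₁`. -/
noncomputable def kappa {p : ℕ} (T0 : Finset (Fin p)) (M : Matrix (Fin p) (Fin p) ℝ) : ℝ :=
  sInf {x | ∃ h : Fin p → ℝ, h ≠ 0 ∧ coneC T0 h ∧
    x = Real.sqrt (T0.card) * Real.sqrt (quad M h) / l1 (restr T0 h)}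

/-- Restricted eigenvalue `RE(T₀; M) = inf_{0 ≠ h ∈ C_{T₀}} (hᵀMh)^{1/2} / ‖h‖₂`. -/
noncomputable def RE {p : ℕ} (T0 : Finset (Fin p)) (M : Matrix (Fin p) (Fin p) ℝ) : ℝ :=
  sInf {x | ∃ h : Fin p → ℝ, h ≠ 0 ∧ coneC T0 h ∧ x = Real.sqrt (quad M h) / l2 h}

/-- Weak cone invertibility factor
`F_q(T₀; M) = inf_{0 ≠ h ∈ C_{T₀}} |T₀|^{1/q} (hᵀMh) / (‖h_{T₀}‖₁ ‖h‖_q)`. -/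
noncomputable def Fq {p : ℕ} (q : ℝ) (T0 : Finset (Fin p)) (M : Matrix (Fin p) (Fin p) ℝ) : ℝ :=
  sInf {x | ∃ h : Fin p → ℝ, h ≠ 0 ∧ coneC T0 h ∧
    x = (T0.card : ℝ) ^ (1 / q) * quad M h / (l1 (restr T0 h) * lqNorm q h)}

/-- The factor `φ_{2S}(T₀; M)`, an infimum over supersets `T ⊇ T₀` with `|T| ≤ 2S` and
nonzero `h ∈ D_{T₀,T}` of `(hᵀMh)^{1/2}/‖h_T‖₂`. -/
noncomputable def phi2S {p : ℕ} (S : ℕ) (T0 : Finset (Fin p)) (M : Matrix (Fin p) (Fin p) ℝ) : ℝ :=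
  sInf {x | ∃ T : Finset (Fin p), T0 ⊆ T ∧ T.card ≤ 2 * S ∧
    ∃ h : Fin p → ℝ, h ≠ 0 ∧ coneC T0 h ∧
      (∀ j ∈ T \ T0, linf (restr Tᶜ h) ≤ |h j|) ∧
      x = Real.sqrt (quad M h) / l2 (restr T h)}

/-- Restricted isometry constant `δ_N(M)`: the smallest `δ ≥ 0` such that
`(1-δ)‖h‖₂² ≤ hᵀM_{T,T}h ≤ (1+δ)‖h‖₂²` for all `T` with `|T| ≤ N` and `h` supported on `T`. -/
noncomputable def deltaRIC {p : ℕ} (N : ℕ) (M : Matrix (Fin p) (Fin p) ℝ) : ℝ :=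
  sInf {δ : ℝ | 0 ≤ δ ∧ ∀ T : Finset (Fin p), T.card ≤ N →
    ∀ h : Fin p → ℝ, (∀ j, j ∉ T → h j = 0) →
      (1 - δ) * (∑ j, (h j) ^ 2) ≤ quad M h ∧ quad M h ≤ (1 + δ) * (∑ j, (h j) ^ 2)}

/-- Restricted orthogonality constant `θ_{S,S'}(M)`: the smallest `θ ≥ 0` such that
`|hᵀM_{T,T'}h'| ≤ θ‖h‖₂‖h'‖₂` for all disjoint `T, T'` with `|T| ≤ S`, `|T'| ≤ S'`. -/
noncomputable def thetaROC {p : ℕ} (S S' : ℕ) (M : Matrix (Fin p) (Fin p) ℝ) : ℝ :=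
  sInf {θ : ℝ | 0 ≤ θ ∧ ∀ T T' : Finset (Fin p), Disjoint T T' →
    T.card ≤ S → T'.card ≤ S' →
    ∀ h h' : Fin p → ℝ, (∀ j, j ∉ T → h j = 0) → (∀ j, j ∉ T' → h' j = 0) →
      |h ⬝ᵥ M.mulVec h'| ≤ θ * l2 h * l2 h'}

section helpers
variable {p : ℕ}

lemma l1_nonneg (h : Fin p → ℝ) : 0 ≤ l1 h := Finset.sum_nonneg fun _ _ => abs_nonneg _

lemma l2_nonneg (h : Fin p → ℝ) : 0 ≤ l2 h := Real.sqrt_nonneg _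

lemma sumsq_nonneg (h : Fin p → ℝ) : 0 ≤ ∑ j, (h j)^2 :=
  Finset.sum_nonneg fun _ _ => sq_nonneg _

lemma l2_sq (h : Fin p → ℝ) : l2 h ^ 2 = ∑ j, (h j)^2 :=
  Real.sq_sqrt (sumsq_nonneg h)

lemma l1_restr (T : Finset (Fin p)) (h : Fin p → ℝ) :
    l1 (restr T h) = ∑ j ∈ T, |h j| := by
  unfold l1 restr
  rw [← Finset.univ_inter T, ← Finset.sum_ite_mem]
  congr 1; funext j; by_cases hj : j ∈ T <;> simp [hj]

lemma sumsq_restr (T : Finset (Fin p)) (h : Fin p → ℝ) :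
    ∑ j, (restr T h j)^2 = ∑ j ∈ T, (h j)^2 := by
  unfold restr
  rw [← Finset.univ_inter T, ← Finset.sum_ite_mem]
  congr 1; funext j; by_cases hj : j ∈ T <;> simp [hj]

lemma l2_restr_mono {T T' : Finset (Fin p)} (hTT : T ⊆ T') (h : Fin p → ℝ) :
    l2 (restr T h) ≤ l2 (restr T' h) := by
  unfold l2
  apply Real.sqrt_le_sqrt
  rw [sumsq_restr, sumsq_restr]
  exact Finset.sum_le_sum_of_subset_of_nonneg hTT (fun _ _ _ => sq_nonneg _)

lemma l1_restr_le_sqrt_card (T : Finset (Fin p)) (h : Fin p → ℝ) :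
    l1 (restr T h) ≤ Real.sqrt T.card * l2 (restr T h) := by
  have hcs := Finset.sum_mul_sq_le_sq_mul_sq T (fun _ => (1:ℝ)) (fun j => |h j|)
  simp only [one_mul, one_pow, Finset.sum_const, nsmul_eq_mul, mul_one, sq_abs] at hcs
  rw [l1_restr]
  have : ∑ j ∈ T, |h j| = Real.sqrt ((∑ j ∈ T, |h j|)^2) :=
    (Real.sqrt_sq (Finset.sum_nonneg fun _ _ => abs_nonneg _)).symm
  rw [this]
  calc Real.sqrt ((∑ j ∈ T, |h j|)^2) ≤ Real.sqrt ((T.card : ℝ) * ∑ j ∈ T, (h j)^2) :=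
        Real.sqrt_le_sqrt hcs
    _ = Real.sqrt T.card * l2 (restr T h) := by
        rw [Real.sqrt_mul (Nat.cast_nonneg T.card)]
        congr 1
        unfold l2; rw [sumsq_restr]

lemma restr_add_compl (T : Finset (Fin p)) (h : Fin p → ℝ) :
    restr T h + restr Tᶜ h = h := by
  funext j; by_cases hj : j ∈ T <;> simp [restr, hj]

lemma l2_restr_pos {T0 T : Finset (Fin p)} (hsub : T0 ⊆ T) {h : Fin p → ℝ}
    (hne : h ≠ 0) (hcone : coneC T0 h) : 0 < l2 (restr T h) := by
  rcases lt_or_eq_of_le (l2_nonneg (restr T h)) with H | H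
  · exact H
  exfalso
  have hsum : ∑ j ∈ T, (h j)^2 = 0 := by
    have := l2_sq (restr T h)
    rw [← H, sumsq_restr] at this
    simpa using this.symm
  have hT : ∀ j ∈ T, h j = 0 := by
    intro j hj
    have := (Finset.sum_eq_zero_iff_of_nonneg (fun i _ => sq_nonneg (h i))).mp hsum j hj
    exact pow_eq_zero_iff (n := 2) (by norm_num) |>.mp this
  have h0 : l1 (restr T0 h) = 0 := by
    rw [l1_restr]
    exact Finset.sum_eq_zero fun j hj => by rw [hT j (hsub hj), abs_zero]
  have hc : l1 (restr T0ᶜ h) = 0 :=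
    le_antisymm (h0 ▸ hcone) (l1_nonneg _)
  apply hne
  funext j
  by_cases hj : j ∈ T0
  · exact hT j (hsub hj)
  · have := (Finset.sum_eq_zero_iff_of_nonneg (fun i _ => abs_nonneg (h i))).mp
      (by rw [← l1_restr]; exact hc) j (Finset.mem_compl.mpr hj)
    simpa using this

end helpers

section mat
variable {p : ℕ}

lemma quad_nonneg {M : Matrix (Fin p) (Fin p) ℝ} (hM : M.PosSemidef) (h : Fin p → ℝ) :
    0 ≤ quad M h := by
  have := hM.dotProduct_mulVec_nonneg h
  simpa [quad] using this

lemma dot_mulVec_symm {M : Matrix (Fin p) (Fin p) ℝ} (hM : M.IsHermitian)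
    (a b : Fin p → ℝ) : a ⬝ᵥ M.mulVec b = b ⬝ᵥ M.mulVec a := by
  have hMt : Mᵀ = M := by
    have := hM.eq
    rwa [Matrix.conjTranspose_eq_transpose_of_trivial] at this
  have hvm : a ᵥ* M = M.mulVec a := by
    rw [← hMt, Matrix.vecMul_transpose, hMt]
  rw [Matrix.dotProduct_mulVec, hvm, dotProduct_comm]

lemma quad_CS {M : Matrix (Fin p) (Fin p) ℝ} (hM : M.PosSemidef) (a b : Fin p → ℝ) :
    (a ⬝ᵥ M.mulVec b)^2 ≤ quad M a * quad M b := by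
  open scoped MatrixOrder in
  obtain ⟨B, hB⟩ := CStarAlgebra.nonneg_iff_eq_star_mul_self.mp hM.nonneg
  rw [Matrix.star_eq_conjTranspose] at hB
  subst hB
  have key : ∀ x y : Fin p → ℝ, x ⬝ᵥ (Bᴴ * B).mulVec y = (B.mulVec x) ⬝ᵥ (B.mulVec y) := by
    intro x y
    rw [← Matrix.mulVec_mulVec, Matrix.dotProduct_mulVec,
      Matrix.conjTranspose_eq_transpose_of_trivial, Matrix.vecMul_transpose]
  rw [key, quad, quad, key, key]
  have := Finset.sum_mul_sq_le_sq_mul_sq Finset.univ (fun i => B.mulVec a i)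
    (fun i => B.mulVec b i)
  simpa [dotProduct, pow_two] using this

end mat

/-- selection of the `k` largest elements -/
lemma exists_top_subset {ι : Type*} [DecidableEq ι] (w : ι → ℝ) :
    ∀ (k : ℕ) (s : Finset ι), k ≤ s.card →
    ∃ B ⊆ s, B.card = k ∧ ∀ i ∈ B, ∀ j ∈ s \ B, w j ≤ w i := by
  intro k
  induction k with
  | zero => intro s _; exact ⟨∅, Finset.empty_subset s, rfl, by simp⟩
  | succ k ih =>
    intro s hk
    have hs : s.Nonempty := Finset.card_pos.mp (lt_of_lt_of_le (Nat.succ_pos k) hk)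
    obtain ⟨m, hm, hmax⟩ := Finset.exists_max_image s w hs
    have hk' : k ≤ (s.erase m).card := by
      rw [Finset.card_erase_of_mem hm]; omega
    obtain ⟨B', hB's, hB'card, hB'top⟩ := ih (s.erase m) hk'
    refine ⟨insert m B', ?_, ?_, ?_⟩
    · intro x hx
      rcases Finset.mem_insert.mp hx with rfl | hx
      · exact hm
      · exact Finset.erase_subset m s (hB's hx)
    · rw [Finset.card_insert_of_notMem (fun hmem => (Finset.mem_erase.mp (hB's hmem)).1 rfl),
        hB'card]
    · intro i hi j hj
      have hjs : j ∈ s := (Finset.mem_sdiff.mp hj).1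
      have hjnB : j ∉ insert m B' := (Finset.mem_sdiff.mp hj).2
      rcases Finset.mem_insert.mp hi with rfl | hi
      · exact hmax j hjs
      · apply hB'top i hi
        rw [Finset.mem_sdiff]
        refine ⟨Finset.mem_erase.mpr ⟨fun hjm => hjnB (hjm ▸ Finset.mem_insert_self m B'), hjs⟩,
          fun hjB' => hjnB (Finset.mem_insert_of_mem hjB')⟩

section cross
variable {p : ℕ}

lemma l2_le_sqrt_card {s : Finset (Fin p)} {v : Fin p → ℝ} {α : ℝ} (hα : 0 ≤ α)
    (hsupp : ∀ j, j ∉ s → v j = 0) (hb : ∀ j, |v j| ≤ α) :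
    l2 v ≤ Real.sqrt s.card * α := by
  have hsum : ∑ j, (v j)^2 = ∑ j ∈ s, (v j)^2 :=
    (Finset.sum_subset (Finset.subset_univ s) (fun x _ hx => by rw [hsupp x hx]; ring)).symm
  have hle : ∑ j ∈ s, (v j)^2 ≤ (s.card : ℝ) * α^2 := by
    calc ∑ j ∈ s, (v j)^2 ≤ ∑ _j ∈ s, α^2 := by
          apply Finset.sum_le_sum
          intro j _
          rw [← sq_abs]
          exact pow_le_pow_left₀ (abs_nonneg _) (hb j) 2
      _ = (s.card : ℝ) * α^2 := by rw [Finset.sum_const, nsmul_eq_mul]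
  unfold l2
  rw [hsum]
  calc Real.sqrt (∑ j ∈ s, (v j)^2) ≤ Real.sqrt ((s.card : ℝ) * α^2) := Real.sqrt_le_sqrt hle
    _ = Real.sqrt s.card * α := by
        rw [Real.sqrt_mul (by positivity), Real.sqrt_sq hα]

lemma cross_bound {S : ℕ} (hS : 1 ≤ S) {M : Matrix (Fin p) (Fin p) ℝ} (hM : M.IsHermitian)
    {θ : ℝ} (hθ0 : 0 ≤ θ)
    (hθ : ∀ T T' : Finset (Fin p), Disjoint T T' → T.card ≤ S → T'.card ≤ 2*S →
      ∀ h h' : Fin p → ℝ, (∀ j, j ∉ T → h j = 0) → (∀ j, j ∉ T' → h' j = 0) →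
        |h ⬝ᵥ M.mulVec h'| ≤ θ * l2 h * l2 h')
    (a : Fin p → ℝ) (A : Finset (Fin p)) (hA : A.card ≤ 2*S) (ha : ∀ j, j ∉ A → a j = 0) :
    ∀ (n : ℕ) (v : Fin p → ℝ) (α : ℝ),
      (Finset.univ.filter (fun j => v j ≠ 0)).card ≤ n →
      0 ≤ α → (∀ j, |v j| ≤ α) → (∀ j ∈ A, v j = 0) →
      |a ⬝ᵥ M.mulVec v| ≤ θ * l2 a * (Real.sqrt S * α + l1 v / Real.sqrt S) := by
  have hsqS : (0:ℝ) < Real.sqrt S := Real.sqrt_pos.mpr (by exact_mod_cast hS)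
  -- the "direct" case: support of v has at most S elements
  have direct : ∀ (v : Fin p → ℝ) (α : ℝ), 0 ≤ α → (∀ j, |v j| ≤ α) →
      (∀ j ∈ A, v j = 0) → (Finset.univ.filter (fun j => v j ≠ 0)).card ≤ S →
      |a ⬝ᵥ M.mulVec v| ≤ θ * l2 a * (Real.sqrt S * α + l1 v / Real.sqrt S) := by
    intro v α hα hb hvA hcard
    set s := Finset.univ.filter (fun j => v j ≠ 0) with hs
    have hsupp : ∀ j, j ∉ s → v j = 0 := by
      intro j hj
      by_contra hne
      exact hj (Finset.mem_filter.mpr ⟨Finset.mem_univ j, hne⟩)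
    have hdisj : Disjoint s A := by
      rw [Finset.disjoint_left]
      intro j hj hjA
      exact (Finset.mem_filter.mp hj).2 (hvA j hjA)
    have h1 : |v ⬝ᵥ M.mulVec a| ≤ θ * l2 v * l2 a := hθ s A hdisj hcard hA v a hsupp ha
    rw [dot_mulVec_symm hM]
    have hl2v : l2 v ≤ Real.sqrt S * α := by
      calc l2 v ≤ Real.sqrt s.card * α := l2_le_sqrt_card hα hsupp hb
        _ ≤ Real.sqrt S * α := by
            apply mul_le_mul_of_nonneg_right _ hα
            exact Real.sqrt_le_sqrt (by exact_mod_cast hcard)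
    calc |v ⬝ᵥ M.mulVec a| ≤ θ * l2 v * l2 a := h1
      _ = θ * l2 a * l2 v := by ring
      _ ≤ θ * l2 a * (Real.sqrt S * α) := by
          exact mul_le_mul_of_nonneg_left hl2v (mul_nonneg hθ0 (l2_nonneg a))
      _ ≤ θ * l2 a * (Real.sqrt S * α + l1 v / Real.sqrt S) := by
          apply mul_le_mul_of_nonneg_left _ (mul_nonneg hθ0 (l2_nonneg a))
          have : 0 ≤ l1 v / Real.sqrt S := div_nonneg (l1_nonneg v) hsqS.le
          linarith
  intro n
  induction n with
  | zero =>
    intro v α hcard hα hb hvA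
    exact direct v α hα hb hvA (le_trans hcard (Nat.zero_le S))
  | succ n ih =>
    intro v α hcard hα hb hvA
    set s := Finset.univ.filter (fun j => v j ≠ 0) with hs
    by_cases hcase : s.card ≤ S
    · exact direct v α hα hb hvA hcase
    push_neg at hcase
    obtain ⟨B, hBs, hBcard, hBtop⟩ := exists_top_subset (fun j => |v j|) S s hcase.le
    set v1 := restr B v with hv1
    set v2 : Fin p → ℝ := fun j => if j ∈ B then 0 else v j with hv2
    have hsplit : v = v1 + v2 := by
      funext j; by_cases hj : j ∈ B <;> simp [hv1, hv2, restr, hj]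
    have hsupp2 : ∀ j, v2 j ≠ 0 → j ∈ s \ B := by
      intro j hj
      rw [hv2] at hj
      by_cases hjB : j ∈ B
      · simp [hjB] at hj
      · simp only [hjB, if_false] at hj
        exact Finset.mem_sdiff.mpr ⟨Finset.mem_filter.mpr ⟨Finset.mem_univ j, hj⟩, hjB⟩
    have hcard2 : (Finset.univ.filter (fun j => v2 j ≠ 0)).card ≤ n := by
      have hsub : Finset.univ.filter (fun j => v2 j ≠ 0) ⊆ s \ B := by
        intro j hj; exact hsupp2 j (Finset.mem_filter.mp hj).2
      have := Finset.card_le_card hsub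
      rw [Finset.card_sdiff_of_subset hBs, hBcard] at this
      omega
    have hl1v1 : l1 v1 = ∑ j ∈ B, |v j| := l1_restr B v
    have hl1v1nn : 0 ≤ l1 v1 := l1_nonneg v1
    set α' := l1 v1 / S with hα'
    have hα'nn : 0 ≤ α' := div_nonneg hl1v1nn (by positivity)
    have hb2 : ∀ j, |v2 j| ≤ α' := by
      intro j
      by_cases hjB : j ∈ B
      · simp only [hv2, hjB, if_true, abs_zero]; exact hα'nn
      simp only [hv2, hjB, if_false]
      by_cases hjv : v j = 0
      · rw [hjv, abs_zero]; exact hα'nn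
      have hjsB : j ∈ s \ B :=
        Finset.mem_sdiff.mpr ⟨Finset.mem_filter.mpr ⟨Finset.mem_univ j, hjv⟩, hjB⟩
      have hsum : (S : ℝ) * |v j| ≤ l1 v1 := by
        rw [hl1v1]
        calc (S:ℝ) * |v j| = ∑ _i ∈ B, |v j| := by
              rw [Finset.sum_const, nsmul_eq_mul, hBcard]
          _ ≤ ∑ i ∈ B, |v i| := Finset.sum_le_sum (fun i hi => hBtop i hi j hjsB)
      rw [hα', le_div_iff₀ (by positivity : (0:ℝ) < (S:ℝ))]
      linarith
    have hvA2 : ∀ j ∈ A, v2 j = 0 := by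
      intro j hj
      simp only [hv2]
      by_cases hjB : j ∈ B <;> simp [hjB, hvA j hj]
    have hIH := ih v2 α' hcard2 hα'nn hb2 hvA2
    -- first piece
    have hdisjBA : Disjoint B A := by
      rw [Finset.disjoint_left]
      intro j hj hjA
      exact (Finset.mem_filter.mp (hBs hj)).2 (hvA j hjA)
    have hsupp1 : ∀ j, j ∉ B → v1 j = 0 := by
      intro j hj; simp [hv1, restr, hj]
    have h1 : |v1 ⬝ᵥ M.mulVec a| ≤ θ * l2 v1 * l2 a :=
      hθ B A hdisjBA (le_of_eq hBcard) hA v1 a hsupp1 ha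
    have h1' : |a ⬝ᵥ M.mulVec v1| ≤ θ * l2 a * l2 v1 := by
      rw [dot_mulVec_symm hM]
      calc |v1 ⬝ᵥ M.mulVec a| ≤ θ * l2 v1 * l2 a := h1
        _ = θ * l2 a * l2 v1 := by ring
    -- key algebraic facts
    have hl2v1 : l2 v1 ≤ Real.sqrt S * α := by
      have : l2 v1 ≤ Real.sqrt B.card * α := by
        apply l2_le_sqrt_card hα hsupp1
        intro j
        by_cases hj : j ∈ B <;> simp [hv1, restr, hj, hb j, hα]
      rwa [hBcard] at this
    have hα'eq : Real.sqrt S * α' = l1 v1 / Real.sqrt S := by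
      rw [hα', eq_div_iff (ne_of_gt hsqS)]
      have hss : Real.sqrt S * Real.sqrt S = (S:ℝ) := Real.mul_self_sqrt (by positivity)
      field_simp
      nlinarith [hss]
    have hl1split : l1 v = l1 v1 + l1 v2 := by
      unfold l1
      rw [← Finset.sum_add_distrib]
      apply Finset.sum_congr rfl
      intro j _
      by_cases hj : j ∈ B <;> simp [hv1, hv2, restr, hj]
    have hsplitdot : a ⬝ᵥ M.mulVec v = a ⬝ᵥ M.mulVec v1 + a ⬝ᵥ M.mulVec v2 := by
      rw [hsplit, Matrix.mulVec_add, dotProduct_add]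
    calc |a ⬝ᵥ M.mulVec v| ≤ |a ⬝ᵥ M.mulVec v1| + |a ⬝ᵥ M.mulVec v2| := by
          rw [hsplitdot]; exact abs_add_le _ _
      _ ≤ θ * l2 a * l2 v1 + θ * l2 a * (Real.sqrt S * α' + l1 v2 / Real.sqrt S) :=
          add_le_add h1' hIH
      _ = θ * l2 a * (l2 v1 + (Real.sqrt S * α' + l1 v2 / Real.sqrt S)) := by ring
      _ ≤ θ * l2 a * (Real.sqrt S * α + l1 v / Real.sqrt S) := by
          apply mul_le_mul_of_nonneg_left _ (mul_nonneg hθ0 (l2_nonneg a))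
          rw [hα'eq, hl1split, add_div]
          linarith
end cross

section key
variable {p : ℕ}

lemma key_bound {S : ℕ} (hS : 1 ≤ S) (hp : 3*S ≤ p)
    {M : Matrix (Fin p) (Fin p) ℝ} (hM : M.PosSemidef)
    {T0 : Finset (Fin p)} (hT0 : T0.card = S)
    {δ θ : ℝ} (hδ0 : 0 ≤ δ) (hθ0 : 0 ≤ θ)
    (hδ : ∀ T : Finset (Fin p), T.card ≤ 2*S →
      ∀ h : Fin p → ℝ, (∀ j, j ∉ T → h j = 0) →
        (1 - δ) * (∑ j, (h j)^2) ≤ quad M h ∧ quad M h ≤ (1 + δ) * (∑ j, (h j)^2))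
    (hθ : ∀ T T' : Finset (Fin p), Disjoint T T' → T.card ≤ S → T'.card ≤ 2*S →
      ∀ h h' : Fin p → ℝ, (∀ j, j ∉ T → h j = 0) → (∀ j, j ∉ T' → h' j = 0) →
        |h ⬝ᵥ M.mulVec h'| ≤ θ * l2 h * l2 h')
    (hpos : 0 < 1 - δ - θ)
    (T : Finset (Fin p)) (hT0T : T0 ⊆ T) (hTcard : T.card ≤ 2*S)
    (h : Fin p → ℝ) (hne : h ≠ 0) (hcone : coneC T0 h)
    (hD : ∀ j ∈ T \ T0, linf (restr Tᶜ h) ≤ |h j|) :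
    (1-δ-θ)/Real.sqrt (1+δ) ≤ Real.sqrt (quad M h) / l2 (restr T h) := by
  have hsqS : (0:ℝ) < Real.sqrt S := Real.sqrt_pos.mpr (by exact_mod_cast hS)
  have hss : Real.sqrt S * Real.sqrt S = (S:ℝ) := Real.mul_self_sqrt (by positivity)
  -- extend T to T' of cardinality exactly 2S
  set k := 2*S - T.card with hk
  have hkle : k ≤ Tᶜ.card := by
    rw [Finset.card_compl, Fintype.card_fin]
    omega
  obtain ⟨B, hBTc, hBcard, hBtop⟩ := exists_top_subset (fun j => |h j|) k Tᶜ hkle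
  set T' := T ∪ B with hT'
  have hdisjTB : Disjoint T B := by
    rw [Finset.disjoint_left]
    intro x hx hxB
    exact (Finset.mem_compl.mp (hBTc hxB)) hx
  have hT'card : T'.card = 2*S := by
    rw [hT', Finset.card_union_of_disjoint hdisjTB, hBcard]
    omega
  have hT0T' : T0 ⊆ T' := hT0T.trans Finset.subset_union_left
  have hTT' : T ⊆ T' := Finset.subset_union_left
  -- transferred dominance property
  have hD' : ∀ j ∈ T' \ T0, ∀ i, i ∉ T' → |h i| ≤ |h j| := by
    intro j hj i hi
    have hiT : i ∉ T := fun hc => hi (hTT' hc)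
    have hiB : i ∉ B := fun hc => hi (Finset.mem_union_right T hc)
    obtain ⟨hjT', hjT0⟩ := Finset.mem_sdiff.mp hj
    rcases Finset.mem_union.mp hjT' with hjT | hjB
    · -- j ∈ T \ T0 : use hD
      have h1 : |h i| = |restr Tᶜ h i| := by
        simp [restr, Finset.mem_compl, hiT]
      have h2 : |restr Tᶜ h i| ≤ linf (restr Tᶜ h) := by
        unfold linf
        exact le_ciSup (f := fun j => |restr Tᶜ h j|) (Finite.bddAbove_range _) i
      have h3 := hD j (Finset.mem_sdiff.mpr ⟨hjT, hjT0⟩)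
      linarith [h1 ▸ h2]
    · -- j ∈ B : use hBtop
      exact hBtop j hjB i (Finset.mem_sdiff.mpr ⟨Finset.mem_compl.mpr hiT, hiB⟩)
  set a := restr T' h with hadef
  set v := restr T'ᶜ h with hvdef
  have hasupp : ∀ j, j ∉ T' → a j = 0 := by intro j hj; simp [hadef, restr, hj]
  have hvsupp : ∀ j ∈ T', v j = 0 := by
    intro j hj; simp [hvdef, restr, Finset.mem_compl, hj]
  have hdpos : 0 < l2 (restr T h) := l2_restr_pos hT0T hne hcone
  have hdl2a : l2 (restr T h) ≤ l2 a := l2_restr_mono hTT' h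
  have hl2apos : 0 < l2 a := lt_of_lt_of_le hdpos hdl2a
  -- the minimum over T' \ T0
  have hsdcard : (T' \ T0).card = S := by
    rw [Finset.card_sdiff_of_subset hT0T', hT'card, hT0]
    omega
  have hsdne : (T' \ T0).Nonempty := Finset.card_pos.mp (by omega)
  obtain ⟨j0, hj0mem, hj0min⟩ := Finset.exists_min_image (T' \ T0) (fun j => |h j|) hsdne
  set α := |h j0| with hαdef
  have hα0 : 0 ≤ α := abs_nonneg _
  have hvb : ∀ i, |v i| ≤ α := by
    intro i
    by_cases hi : i ∈ T'
    · simp [hvdef, restr, Finset.mem_compl, hi, hα0]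
    · have : v i = h i := by simp [hvdef, restr, Finset.mem_compl, hi]
      rw [this]
      exact hD' j0 hj0mem i hi
  -- √S α ≤ ‖h_{T'\T0}‖₁ / √S
  have hSα : Real.sqrt S * α ≤ l1 (restr (T' \ T0) h) / Real.sqrt S := by
    have hsum : (S : ℝ) * α ≤ l1 (restr (T' \ T0) h) := by
      rw [l1_restr]
      calc (S:ℝ) * α = ∑ _j ∈ T' \ T0, α := by
            rw [Finset.sum_const, nsmul_eq_mul, hsdcard]
        _ ≤ ∑ j ∈ T' \ T0, |h j| := Finset.sum_le_sum (fun j hj => hj0min j hj)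
    rw [le_div_iff₀ hsqS]
    nlinarith [hss]
  -- cross term bound
  have hfiltcard : (Finset.univ.filter (fun j => v j ≠ 0)).card ≤ p :=
    le_trans (Finset.card_filter_le _ _) (by simp)
  have hcross := cross_bound hS hM.1 hθ0 hθ a T' (le_of_eq hT'card) hasupp p v α
    hfiltcard hα0 hvb hvsupp
  -- ‖h_{T'\T0}‖₁ + ‖v‖₁ ≤ ‖h_{T0}‖₁ ≤ √S l2 a
  have hl1sum : l1 (restr (T' \ T0) h) + l1 v = l1 (restr T0ᶜ h) := by
    rw [l1_restr, l1_restr, l1_restr]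
    rw [← Finset.sum_union]
    · congr 1
      ext x
      simp only [Finset.mem_union, Finset.mem_sdiff, Finset.mem_compl]
      constructor
      · rintro (⟨_, hx⟩ | hx)
        · exact hx
        · exact fun hc => hx (hT0T' hc)
      · intro hx
        by_cases hxT' : x ∈ T'
        · exact Or.inl ⟨hxT', hx⟩
        · exact Or.inr hxT'
    · rw [Finset.disjoint_left]
      intro x hx hx'
      exact (Finset.mem_compl.mp hx') (Finset.mem_sdiff.mp hx).1
  have hl1T0 : l1 (restr T0ᶜ h) ≤ Real.sqrt S * l2 a := by
    calc l1 (restr T0ᶜ h) ≤ l1 (restr T0 h) := hcone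
      _ ≤ Real.sqrt T0.card * l2 (restr T0 h) := l1_restr_le_sqrt_card T0 h
      _ ≤ Real.sqrt S * l2 a := by
          rw [hT0]
          exact mul_le_mul_of_nonneg_left (l2_restr_mono hT0T' h) (Real.sqrt_nonneg _)
  have hinner : Real.sqrt S * α + l1 v / Real.sqrt S ≤ l2 a := by
    have h1 : Real.sqrt S * α + l1 v / Real.sqrt S ≤
        (l1 (restr (T' \ T0) h) + l1 v) / Real.sqrt S := by
      rw [add_div]
      linarith
    rw [hl1sum] at h1
    have h2 : l1 (restr T0ᶜ h) / Real.sqrt S ≤ l2 a := by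
      rw [div_le_iff₀ hsqS]
      nlinarith [hl1T0]
    linarith
  have hcross2 : |a ⬝ᵥ M.mulVec v| ≤ θ * (l2 a * l2 a) := by
    calc |a ⬝ᵥ M.mulVec v| ≤ θ * l2 a * (Real.sqrt S * α + l1 v / Real.sqrt S) := hcross
      _ ≤ θ * l2 a * l2 a := mul_le_mul_of_nonneg_left hinner (mul_nonneg hθ0 (l2_nonneg a))
      _ = θ * (l2 a * l2 a) := by ring
  -- RIC bounds for a
  have hsumsq : ∑ j, (a j)^2 = l2 a ^ 2 := (l2_sq a).symm
  obtain ⟨hric1, hric2⟩ := hδ T' (le_of_eq hT'card) a hasupp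
  rw [hsumsq] at hric1 hric2
  -- decomposition of the quadratic form
  have hhav : a + v = h := restr_add_compl T' h
  have hsplitdot : a ⬝ᵥ M.mulVec h = quad M a + a ⬝ᵥ M.mulVec v := by
    rw [← hhav, Matrix.mulVec_add, dotProduct_add]
    rfl
  have hlower : (1 - δ - θ) * l2 a ^ 2 ≤ a ⬝ᵥ M.mulVec h := by
    rw [hsplitdot]
    have := neg_abs_le (a ⬝ᵥ M.mulVec v)
    nlinarith [hcross2, hric1]
  -- Cauchy-Schwarz
  have hqa : 0 ≤ quad M a := quad_nonneg hM a
  have hqh : 0 ≤ quad M h := quad_nonneg hM h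
  have hCS : a ⬝ᵥ M.mulVec h ≤ Real.sqrt (quad M a) * Real.sqrt (quad M h) := by
    have h1 := quad_CS hM a h
    have h2 : a ⬝ᵥ M.mulVec h ≤ |a ⬝ᵥ M.mulVec h| := le_abs_self _
    have h3 : |a ⬝ᵥ M.mulVec h| = Real.sqrt ((a ⬝ᵥ M.mulVec h)^2) := (Real.sqrt_sq_eq_abs _).symm
    rw [h3] at h2
    calc a ⬝ᵥ M.mulVec h ≤ Real.sqrt ((a ⬝ᵥ M.mulVec h)^2) := h2
      _ ≤ Real.sqrt (quad M a * quad M h) := Real.sqrt_le_sqrt h1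
      _ = Real.sqrt (quad M a) * Real.sqrt (quad M h) := Real.sqrt_mul hqa _
  have hqa2 : Real.sqrt (quad M a) ≤ Real.sqrt (1 + δ) * l2 a := by
    calc Real.sqrt (quad M a) ≤ Real.sqrt ((1 + δ) * l2 a ^ 2) := Real.sqrt_le_sqrt hric2
      _ = Real.sqrt (1 + δ) * l2 a := by
          rw [Real.sqrt_mul (by linarith), Real.sqrt_sq (l2_nonneg a)]
  have hsq1δ : (0:ℝ) < Real.sqrt (1 + δ) := Real.sqrt_pos.mpr (by linarith)
  have hqhnn : 0 ≤ Real.sqrt (quad M h) := Real.sqrt_nonneg _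
  have hchain : (1 - δ - θ) * l2 a ^ 2 ≤ Real.sqrt (1 + δ) * l2 a * Real.sqrt (quad M h) := by
    calc (1 - δ - θ) * l2 a ^ 2 ≤ a ⬝ᵥ M.mulVec h := hlower
      _ ≤ Real.sqrt (quad M a) * Real.sqrt (quad M h) := hCS
      _ ≤ Real.sqrt (1 + δ) * l2 a * Real.sqrt (quad M h) :=
          mul_le_mul_of_nonneg_right hqa2 hqhnn
  have hstep : (1 - δ - θ) * l2 a ≤ Real.sqrt (1 + δ) * Real.sqrt (quad M h) := by
    have h' : ((1 - δ - θ) * l2 a) * l2 a ≤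
        (Real.sqrt (1 + δ) * Real.sqrt (quad M h)) * l2 a := by
      calc ((1 - δ - θ) * l2 a) * l2 a = (1 - δ - θ) * l2 a ^ 2 := by ring
        _ ≤ Real.sqrt (1 + δ) * l2 a * Real.sqrt (quad M h) := hchain
        _ = (Real.sqrt (1 + δ) * Real.sqrt (quad M h)) * l2 a := by ring
    exact le_of_mul_le_mul_right h' hl2apos
  rw [div_le_div_iff₀ hsq1δ hdpos]
  have hfin : (1 - δ - θ) * l2 (restr T h) ≤ (1 - δ - θ) * l2 a :=
    mul_le_mul_of_nonneg_left hdl2a hpos.le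
  calc (1 - δ - θ) * l2 (restr T h) ≤ (1 - δ - θ) * l2 a := hfin
    _ ≤ Real.sqrt (1 + δ) * Real.sqrt (quad M h) := hstep
    _ = Real.sqrt (quad M h) * Real.sqrt (1 + δ) := by ring
end key

section sets
variable {p : ℕ}

lemma entry_le_l2 (h : Fin p → ℝ) (i : Fin p) : |h i| ≤ l2 h := by
  rw [← Real.sqrt_sq_eq_abs]
  exact Real.sqrt_le_sqrt (Finset.single_le_sum (f := fun k => (h k)^2)
    (fun k _ => sq_nonneg _) (Finset.mem_univ i))

lemma quad_expand (M : Matrix (Fin p) (Fin p) ℝ) (a b : Fin p → ℝ) :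
    a ⬝ᵥ M.mulVec b = ∑ i, ∑ j, a i * (M i j * b j) := by
  simp [dotProduct, Matrix.mulVec, Finset.mul_sum]

lemma quad_le_bound (M : Matrix (Fin p) (Fin p) ℝ) (a b : Fin p → ℝ) :
    |a ⬝ᵥ M.mulVec b| ≤ (∑ i, ∑ j, |M i j|) * l2 a * l2 b := by
  rw [quad_expand]
  calc |∑ i, ∑ j, a i * (M i j * b j)| ≤ ∑ i, |∑ j, a i * (M i j * b j)| :=
        Finset.abs_sum_le_sum_abs _ _
    _ ≤ ∑ i, ∑ j, |a i * (M i j * b j)| :=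
        Finset.sum_le_sum (fun i _ => Finset.abs_sum_le_sum_abs _ _)
    _ ≤ ∑ i, ∑ j, |M i j| * l2 a * l2 b := by
        apply Finset.sum_le_sum; intro i _
        apply Finset.sum_le_sum; intro j _
        rw [abs_mul, abs_mul]
        have h1 := entry_le_l2 a i
        have h2 := entry_le_l2 b j
        have h3 := abs_nonneg (a i)
        have h4 := abs_nonneg (b j)
        have h5 := abs_nonneg (M i j)
        have h6 := (abs_nonneg (a i)).trans h1
        have h8 := mul_le_mul h1 h2 h4 h6
        nlinarith [mul_le_mul_of_nonneg_left h8 h5]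
    _ = (∑ i, ∑ j, |M i j|) * l2 a * l2 b := by
        rw [Finset.sum_mul, Finset.sum_mul]
        congr 1; funext i
        rw [Finset.sum_mul, Finset.sum_mul]

lemma deltaSet_nonempty {N : ℕ} (M : Matrix (Fin p) (Fin p) ℝ) (hM : M.PosSemidef) :
    Set.Nonempty {δ : ℝ | 0 ≤ δ ∧ ∀ T : Finset (Fin p), T.card ≤ N →
      ∀ h : Fin p → ℝ, (∀ j, j ∉ T → h j = 0) →
        (1 - δ) * (∑ j, (h j) ^ 2) ≤ quad M h ∧ quad M h ≤ (1 + δ) * (∑ j, (h j) ^ 2)} := by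
  set C := ∑ i, ∑ j, |M i j| with hC
  have hCnn : 0 ≤ C := Finset.sum_nonneg fun _ _ => Finset.sum_nonneg fun _ _ => abs_nonneg _
  refine ⟨1 + C, by linarith, ?_⟩
  intro T _ h _
  have hsq : 0 ≤ ∑ j, (h j)^2 := sumsq_nonneg h
  have hq : 0 ≤ quad M h := quad_nonneg hM h
  have hub : quad M h ≤ C * (∑ j, (h j)^2) := by
    have := quad_le_bound M h h
    have hl2 : l2 h * l2 h = ∑ j, (h j)^2 := by
      have := l2_sq h; nlinarith [this]
    calc quad M h ≤ |h ⬝ᵥ M.mulVec h| := le_abs_self _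
      _ ≤ C * l2 h * l2 h := quad_le_bound M h h
      _ = C * (∑ j, (h j)^2) := by rw [mul_assoc, hl2]
  constructor
  · nlinarith
  · nlinarith

lemma thetaSet_nonempty {S S' : ℕ} (M : Matrix (Fin p) (Fin p) ℝ) :
    Set.Nonempty {θ : ℝ | 0 ≤ θ ∧ ∀ T T' : Finset (Fin p), Disjoint T T' →
      T.card ≤ S → T'.card ≤ S' →
      ∀ h h' : Fin p → ℝ, (∀ j, j ∉ T → h j = 0) → (∀ j, j ∉ T' → h' j = 0) →
        |h ⬝ᵥ M.mulVec h'| ≤ θ * l2 h * l2 h'} := by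
  set C := ∑ i, ∑ j, |M i j| with hC
  have hCnn : 0 ≤ C := Finset.sum_nonneg fun _ _ => Finset.sum_nonneg fun _ _ => abs_nonneg _
  exact ⟨C, hCnn, fun T T' _ _ _ h h' _ _ => quad_le_bound M h h'⟩

lemma deltaRIC_nonneg {N : ℕ} (M : Matrix (Fin p) (Fin p) ℝ) : 0 ≤ deltaRIC N M :=
  Real.sInf_nonneg (fun _ hx => hx.1)

lemma thetaROC_nonneg {S S' : ℕ} (M : Matrix (Fin p) (Fin p) ℝ) : 0 ≤ thetaROC S S' M :=
  Real.sInf_nonneg (fun _ hx => hx.1)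

lemma deltaRIC_add_mem {N : ℕ} (M : Matrix (Fin p) (Fin p) ℝ) (hM : M.PosSemidef)
    {ε : ℝ} (hε : 0 < ε) :
    (deltaRIC N M + ε) ∈ {δ : ℝ | 0 ≤ δ ∧ ∀ T : Finset (Fin p), T.card ≤ N →
      ∀ h : Fin p → ℝ, (∀ j, j ∉ T → h j = 0) →
        (1 - δ) * (∑ j, (h j) ^ 2) ≤ quad M h ∧ quad M h ≤ (1 + δ) * (∑ j, (h j) ^ 2)} := by
  obtain ⟨d, hd, hdlt⟩ := exists_lt_of_csInf_lt (deltaSet_nonempty M hM)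
    (lt_add_of_pos_right (deltaRIC N M) hε)
  obtain ⟨hd0, hdprop⟩ := hd
  refine ⟨by linarith, ?_⟩
  intro T hT h hsupp
  obtain ⟨h1, h2⟩ := hdprop T hT h hsupp
  have hsq : 0 ≤ ∑ j, (h j)^2 := sumsq_nonneg h
  constructor
  · nlinarith
  · nlinarith

lemma thetaROC_add_mem {S S' : ℕ} (M : Matrix (Fin p) (Fin p) ℝ)
    {ε : ℝ} (hε : 0 < ε) :
    (thetaROC S S' M + ε) ∈ {θ : ℝ | 0 ≤ θ ∧ ∀ T T' : Finset (Fin p), Disjoint T T' →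
      T.card ≤ S → T'.card ≤ S' →
      ∀ h h' : Fin p → ℝ, (∀ j, j ∉ T → h j = 0) → (∀ j, j ∉ T' → h' j = 0) →
        |h ⬝ᵥ M.mulVec h'| ≤ θ * l2 h * l2 h'} := by
  obtain ⟨d, hd, hdlt⟩ := exists_lt_of_csInf_lt (thetaSet_nonempty M)
    (lt_add_of_pos_right (thetaROC S S' M) hε)
  obtain ⟨hd0, hdprop⟩ := hd
  refine ⟨by linarith, ?_⟩
  intro T T' hdisj hT hT' h h' hs hs'
  have := hdprop T T' hdisj hT hT' h h' hs hs'
  have hn1 : 0 ≤ l2 h := l2_nonneg h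
  have hn2 : 0 ≤ l2 h' := l2_nonneg h'
  have h9 := mul_le_mul_of_nonneg_right (mul_le_mul_of_nonneg_right hdlt.le hn1) hn2
  linarith
end sets

lemma per_n {p S : ℕ} (hS : 1 ≤ S) (hp : 3*S ≤ p)
    {M : Matrix (Fin p) (Fin p) ℝ} (hM : M.PosSemidef)
    {T0 : Finset (Fin p)} (hT0 : T0.card = S)
    {c : ℝ} (hc0 : 0 < c)
    (hcle : c ≤ 1 - deltaRIC (2*S) M - thetaROC S (2*S) M) :
    (c/2)/Real.sqrt 2 ≤ phi2S S T0 M ∧ phi2S S T0 M ≤ Real.sqrt 2 := by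
  have hδ0 : 0 ≤ deltaRIC (2*S) M := deltaRIC_nonneg M
  have hθ0 : 0 ≤ thetaROC S (2*S) M := thetaROC_nonneg M
  have hc1 : c ≤ 1 := by linarith
  have hε : 0 < c/4 := by linarith
  have hδmem := deltaRIC_add_mem (N := 2*S) M hM hε
  have hθmem := thetaROC_add_mem (S := S) (S' := 2*S) M hε
  set δ' := deltaRIC (2*S) M + c/4 with hδ'def
  set θ' := thetaROC S (2*S) M + c/4 with hθ'def
  have hδ'0 : 0 ≤ δ' := hδmem.1
  have hθ'0 : 0 ≤ θ' := hθmem.1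
  have hpos : 0 < 1 - δ' - θ' := by rw [hδ'def, hθ'def]; linarith
  have hchalf : c/2 ≤ 1 - δ' - θ' := by rw [hδ'def, hθ'def]; linarith
  have hδ'le1 : δ' ≤ 1 := by rw [hδ'def]; linarith
  -- the indicator test vector
  set h0 : Fin p → ℝ := fun j => if j ∈ T0 then (1:ℝ) else 0 with hh0
  have hT0ne : T0.Nonempty := Finset.card_pos.mp (by omega)
  obtain ⟨j1, hj1⟩ := hT0ne
  have h0ne : h0 ≠ 0 := by
    intro hcon
    have := congrFun hcon j1
    simp [hh0, hj1] at this
  have hcone0 : coneC T0 h0 := by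
    unfold coneC
    have hz : l1 (restr T0ᶜ h0) = 0 := by
      rw [l1_restr]
      apply Finset.sum_eq_zero
      intro j hj
      simp [hh0, Finset.mem_compl.mp hj]
    rw [hz]
    exact l1_nonneg _
  have hmem0 : Real.sqrt (quad M h0) / l2 (restr T0 h0) ∈
      {x | ∃ T : Finset (Fin p), T0 ⊆ T ∧ T.card ≤ 2 * S ∧
        ∃ h : Fin p → ℝ, h ≠ 0 ∧ coneC T0 h ∧
          (∀ j ∈ T \ T0, linf (restr Tᶜ h) ≤ |h j|) ∧
          x = Real.sqrt (quad M h) / l2 (restr T h)} :=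
    ⟨T0, Finset.Subset.refl T0, by omega, h0, h0ne, hcone0,
      by simp [Finset.sdiff_self], rfl⟩
  have hsupp0 : ∀ j, j ∉ T0 → h0 j = 0 := fun j hj => by simp [hh0, hj]
  have hsum0 : ∑ j, (h0 j)^2 = (S:ℝ) := by
    have : ∀ j, (h0 j)^2 = if j ∈ T0 then (1:ℝ) else 0 := by
      intro j; by_cases hj : j ∈ T0 <;> simp [hh0, hj]
    rw [Finset.sum_congr rfl (fun j _ => this j)]
    rw [Finset.sum_ite_mem, Finset.univ_inter, Finset.sum_const, hT0]
    simp
  have hquad0 := (hδmem.2 T0 (by omega) h0 hsupp0).2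
  have hrestr0 : restr T0 h0 = h0 := by
    funext j; by_cases hj : j ∈ T0 <;> simp [restr, hh0, hj]
  have hl20 : l2 (restr T0 h0) = Real.sqrt S := by
    rw [hrestr0]; unfold l2; rw [hsum0]
  have hsqSpos : (0:ℝ) < Real.sqrt S := Real.sqrt_pos.mpr (by exact_mod_cast hS)
  have hx0le : Real.sqrt (quad M h0) / l2 (restr T0 h0) ≤ Real.sqrt 2 := by
    rw [hl20, div_le_iff₀ hsqSpos]
    calc Real.sqrt (quad M h0) ≤ Real.sqrt (2 * S) := by
          apply Real.sqrt_le_sqrt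
          rw [hsum0] at hquad0
          have hSnn : (0:ℝ) ≤ S := by positivity
          nlinarith
      _ = Real.sqrt 2 * Real.sqrt S := Real.sqrt_mul (by norm_num) _
  have hbddbelow : BddBelow {x | ∃ T : Finset (Fin p), T0 ⊆ T ∧ T.card ≤ 2 * S ∧
      ∃ h : Fin p → ℝ, h ≠ 0 ∧ coneC T0 h ∧
        (∀ j ∈ T \ T0, linf (restr Tᶜ h) ≤ |h j|) ∧
        x = Real.sqrt (quad M h) / l2 (restr T h)} := by
    refine ⟨0, fun x hx => ?_⟩
    obtain ⟨T, _, _, h, _, _, _, rfl⟩ := hx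
    exact div_nonneg (Real.sqrt_nonneg _) (l2_nonneg _)
  have hKle : ∀ x ∈ {x | ∃ T : Finset (Fin p), T0 ⊆ T ∧ T.card ≤ 2 * S ∧
      ∃ h : Fin p → ℝ, h ≠ 0 ∧ coneC T0 h ∧
        (∀ j ∈ T \ T0, linf (restr Tᶜ h) ≤ |h j|) ∧
        x = Real.sqrt (quad M h) / l2 (restr T h)}, (c/2)/Real.sqrt 2 ≤ x := by
    rintro x ⟨T, hT0T, hTcard, h, hne, hcone, hD, rfl⟩
    have hkey := key_bound hS hp hM hT0 hδ'0 hθ'0 hδmem.2 hθmem.2 hpos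
      T hT0T hTcard h hne hcone hD
    have hcomp : (c/2)/Real.sqrt 2 ≤ (1 - δ' - θ')/Real.sqrt (1 + δ') := by
      apply div_le_div₀ hpos.le hchalf (Real.sqrt_pos.mpr (by linarith))
      exact Real.sqrt_le_sqrt (by linarith)
    linarith
  constructor
  · exact le_csInf ⟨_, hmem0⟩ hKle
  · exact le_trans (csInf_le hbddbelow hmem0) hx0le

/-- If `liminf_n (1 - δ_{2S}(Σ_n) - θ_{S,2S}(Σ_n)) > 0`, then
`liminf_n φ_{2S}(T₀⁽ⁿ⁾; Σ_n) > 0`. -/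
theorem stmt0 (S : ℕ) (hS : 1 ≤ S) (p : ℕ → ℕ) (hp : ∀ n, 3 * S ≤ p n)
    (M : ∀ n, Matrix (Fin (p n)) (Fin (p n)) ℝ) (hM : ∀ n, (M n).PosSemidef)
    (T0 : ∀ n, Finset (Fin (p n))) (hT0 : ∀ n, (T0 n).card = S)
    (hliminf : 0 < Filter.atTop.liminf
      (fun n => 1 - deltaRIC (2 * S) (M n) - thetaROC S (2 * S) (M n))) :
    0 < Filter.atTop.liminf (fun n => phi2S S (T0 n) (M n)) := by
  rw [Filter.liminf_eq] at hliminf ⊢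
  have hne : {a : ℝ | ∀ᶠ n in Filter.atTop,
      a ≤ 1 - deltaRIC (2 * S) (M n) - thetaROC S (2 * S) (M n)}.Nonempty := by
    by_contra hcon
    rw [Set.not_nonempty_iff_eq_empty] at hcon
    rw [hcon, Real.sSup_empty] at hliminf
    exact lt_irrefl 0 hliminf
  obtain ⟨c, hcmem, hc0⟩ := exists_lt_of_lt_csSup hne hliminf
  have hcmem' : ∀ᶠ n in Filter.atTop,
      c ≤ 1 - deltaRIC (2 * S) (M n) - thetaROC S (2 * S) (M n) := hcmem
  have hev : ∀ᶠ n in Filter.atTop,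
      (c/2)/Real.sqrt 2 ≤ phi2S S (T0 n) (M n) ∧ phi2S S (T0 n) (M n) ≤ Real.sqrt 2 :=
    hcmem'.mono (fun n hn => per_n hS (hp n) (hM n) (hT0 n) hc0 hn)
  have hKpos : 0 < (c/2)/Real.sqrt 2 :=
    div_pos (by linarith) (Real.sqrt_pos.mpr (by norm_num))
  have hmemK : (c/2)/Real.sqrt 2 ∈ {a : ℝ | ∀ᶠ n in Filter.atTop,
      a ≤ phi2S S (T0 n) (M n)} := hev.mono (fun n hn => hn.1)
  have hsqrt2 : Real.sqrt 2 ≤ 2 := by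
    have h1 : Real.sqrt 2 ≤ Real.sqrt 4 := Real.sqrt_le_sqrt (by norm_num)
    have h2 : Real.sqrt 4 = 2 := by
      rw [show (4:ℝ) = 2^2 by norm_num, Real.sqrt_sq (by norm_num)]
    linarith
  have hbdd : BddAbove {a : ℝ | ∀ᶠ n in Filter.atTop, a ≤ phi2S S (T0 n) (M n)} := by
    refine ⟨2, fun a ha => ?_⟩
    obtain ⟨n, hn1, hn2⟩ := (Filter.Eventually.and ha hev).exists
    linarith [hn2.2]
  exact lt_of_lt_of_le hKpos (le_csSup hbdd hmemK)
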